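/- Consider the random walk on the ring Z/NZ (N > 2) with rates λ(x,x+1) = a_x e^{βq/2} and λ(x+1,x) = a_x e^{-βq/2}, q > 0, a_x > 0 independent of β. Then the stationary distribution satisfies ρ(x)/ρ(y) → a_y/a_x as β → ∞, with error O(e^{-βε}) for some ε > 0. -/

import Mathlib

/-- Driven ring walk on `Z/NZ` (`N = m+3 > 2`) with rates
`λ(x,x+1) = a_x e^{βq/2}`, `λ(x+1,x) = a_x e^{-βq/2}`: its stationary distribution
satisfies `ρ(x)/ρ(y) = a_y/a_x + O(e^{-βε})` as `β → ∞`. -/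
private lemma ring_term_aux (m : ℕ) (a : Fin (m+3) → ℝ) (c c' : ℝ) (ρ : Fin (m+3) → ℝ)
    (w yy : Fin (m+3)) (h2ne : (2 : Fin (m+3)) ≠ 0) :
    (if yy = w + 1 then a w * c else if w = yy + 1 then a yy * c' else 0) * ρ w
      - (if w = yy + 1 then a yy * c else if yy = w + 1 then a w * c' else 0) * ρ yy
    = (if yy = w+1 then a w * c * ρ w - a w * c' * ρ (w+1) else 0)
      + (if yy = w-1 then -(a (w-1) * c * ρ (w-1) - a (w-1) * c' * ρ w) else 0) := by
  split_ifs with g1 g2 g3 g4 g5 g6 g7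
  · exact absurd (by open Fin.CommRing in linear_combination -g1 - g2) h2ne
  · exact absurd (by open Fin.CommRing in linear_combination -g1 - g2) h2ne
  · exact absurd (by open Fin.CommRing in linear_combination g4 - g1) h2ne
  · subst g1; ring
  · subst g6; ring
  · exact absurd (by open Fin.CommRing in linear_combination -g5) g6
  · exact absurd (by open Fin.CommRing in linear_combination -g7) g5
  · ring

theorem stmt11 (m : ℕ) (q : ℝ) (hq : 0 < q)
    (a : Fin (m + 3) → ℝ) (ha : ∀ x, 0 < a x)
    (lam : ℝ → Fin (m + 3) → Fin (m + 3) → ℝ)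
    (hlam : ∀ (β : ℝ) (x y : Fin (m + 3)),
      lam β x y = if y = x + 1 then a x * Real.exp (β * q / 2)
        else if x = y + 1 then a y * Real.exp (-(β * q) / 2) else 0)
    (ρ : ℝ → Fin (m + 3) → ℝ)
    (hρpos : ∀ β x, 0 < ρ β x)
    (hρsum : ∀ β, ∑ x, ρ β x = 1)
    (hstat : ∀ (β : ℝ) (x : Fin (m + 3)),
      ∑ y, (lam β x y * ρ β x - lam β y x * ρ β y) = 0) :
    ∀ x y : Fin (m + 3), ∃ ε > (0 : ℝ), ∃ C > (0 : ℝ), ∃ β₀ : ℝ, ∀ β ≥ β₀,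
      |ρ β x / ρ β y - a y / a x| ≤ C * Real.exp (-β * ε) := by
  intro x y
  have h2ne : (2 : Fin (m+3)) ≠ 0 := by
    intro h
    have := congrArg Fin.val h
    rw [Fin.val_two, Fin.val_zero] at this
    exact (by norm_num : (2:ℕ) ≠ 0) this
  set S : ℝ := ∑ z : Fin (m+3), (a z)⁻¹ with hSdef
  have hSpos : (0:ℝ) < S :=
    Finset.sum_pos (fun z _ => inv_pos.2 (ha z)) Finset.univ_nonempty
  have hρle1 : ∀ β z, ρ β z ≤ 1 := by
    intro β z
    have h := hρsum β
    calc ρ β z ≤ ∑ w, ρ β w :=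
          Finset.single_le_sum (fun w _ => (hρpos β w).le) (Finset.mem_univ z)
      _ = 1 := h
  -- key recursion
  have key : ∀ (β : ℝ) (z : Fin (m+3)),
      ρ β z = (1 - Real.exp (-(β*q)))/S / a z + Real.exp (-(β*q)) * ρ β (z+1) := by
    intro β
    set c : ℝ := Real.exp (β*q/2) with hc
    set c' : ℝ := Real.exp (-(β*q)/2) with hc'
    have hcpos : 0 < c := Real.exp_pos _
    have hcc' : c * c' = 1 := by
      rw [hc, hc', ← Real.exp_add]
      rw [show β*q/2 + -(β*q)/2 = 0 by ring, Real.exp_zero]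
    have hcE : c * Real.exp (-(β*q)) = c' := by
      rw [hc, hc', ← Real.exp_add]; ring_nf
    set J : Fin (m+3) → ℝ :=
      fun z => a z * c * ρ β z - a z * c' * ρ β (z+1) with hJdef
    have hJapp : ∀ z, J z = a z * c * ρ β z - a z * c' * ρ β (z+1) := fun z => rfl
    have hJstep : ∀ w, J w = J (w-1) := by
      intro w
      have h := hstat β w
      have hterm : ∀ yy, lam β w yy * ρ β w - lam β yy w * ρ β yy
          = (if yy = w+1 then a w * c * ρ β w - a w * c' * ρ β (w+1) else 0)
            + (if yy = w-1 then -(a (w-1) * c * ρ β (w-1) - a (w-1) * c' * ρ β w) else 0) := by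
        intro yy
        rw [hlam, hlam]
        exact ring_term_aux m a c c' (ρ β) w yy h2ne
      rw [Finset.sum_congr rfl (fun yy _ => hterm yy), Finset.sum_add_distrib,
        Finset.sum_ite_eq', Finset.sum_ite_eq'] at h
      simp only [Finset.mem_univ, if_true] at h
      rw [hJapp w, hJapp (w-1), show w - 1 + 1 = w from sub_add_cancel w 1]
      linarith
    have hJ1 : ∀ z, J (z+1) = J z := by
      intro z
      have := hJstep (z+1)
      rwa [add_sub_cancel_right] at this
    have hJnat : ∀ n : ℕ, J (open Fin.NatCast in (n : Fin (m+3))) = J 0 := by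
      intro n
      induction n with
      | zero => simp
      | succ k ih => open Fin.NatCast in rw [Nat.cast_succ, hJ1]; exact ih
    have hK : ∀ z, a z * c * ρ β z - a z * c' * ρ β (z+1) = J 0 := by
      intro z
      rw [← hJapp z]
      have := hJnat z.val
      rwa [Fin.cast_val_eq_self] at this
    have hrec : ∀ z, ρ β z = (J 0) * c' / a z + Real.exp (-(β*q)) * ρ β (z+1) := by
      intro z
      have h := hK z
      have hane : a z ≠ 0 := (ha z).ne'
      have hmul : a z * c * ρ β z
          = a z * c * ((J 0) * c' / a z + Real.exp (-(β*q)) * ρ β (z+1)) := by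
        have hx : a z * c * ((J 0) * c' / a z + Real.exp (-(β*q)) * ρ β (z+1))
            = (c * c') * (J 0) + a z * (c * Real.exp (-(β*q))) * ρ β (z+1) := by
          field_simp
        rw [hx, hcc', hcE, one_mul]
        linarith
      exact mul_left_cancel₀ (mul_pos (ha z) hcpos).ne' hmul
    have hsum1 : ∑ z : Fin (m+3), ρ β (z+1) = 1 := by
      rw [Fintype.sum_equiv (Equiv.addRight (1 : Fin (m+3))) _ (ρ β) (fun z => by simp)]
      exact hρsum β
    set t : ℝ := (J 0) * c' with htdef
    have h1 : (1:ℝ) = t * S + Real.exp (-(β*q)) := by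
      calc (1:ℝ) = ∑ z, ρ β z := (hρsum β).symm
        _ = ∑ z : Fin (m+3), (t * (a z)⁻¹ + Real.exp (-(β*q)) * ρ β (z+1)) := by
            refine Finset.sum_congr rfl fun z _ => ?_
            rw [hrec z, div_eq_mul_inv]
        _ = t * S + Real.exp (-(β*q)) := by
            rw [Finset.sum_add_distrib, ← Finset.mul_sum, ← Finset.mul_sum, hsum1,
              mul_one, hSdef]
    have ht : t = (1 - Real.exp (-(β*q)))/S := by
      field_simp
      linarith
    intro z
    rw [hrec z, ht]
  -- conclusion
  have haxne : a x ≠ 0 := (ha x).ne'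
  have hayne : a y ≠ 0 := (ha y).ne'
  have hk : 0 < a y / a x := div_pos (ha y) (ha x)
  have hEq1 : Real.exp (-q) < 1 := Real.exp_lt_one_iff.mpr (by linarith)
  have hden : 0 < 1 - Real.exp (-q) := by linarith
  refine ⟨q, hq, (1 + a y / a x) * (S * a y) / (1 - Real.exp (-q)),
    div_pos (mul_pos (by linarith) (mul_pos hSpos (ha y))) hden, 1, ?_⟩
  intro β hβ
  set E : ℝ := Real.exp (-(β*q)) with hE
  have hEpos : 0 < E := Real.exp_pos _
  have hEle : E ≤ Real.exp (-q) := Real.exp_le_exp.mpr (by nlinarith)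
  have hE1 : E < 1 := lt_of_le_of_lt hEle hEq1
  have hSay : 0 < S * a y := mul_pos hSpos (ha y)
  have hdy : (1 - Real.exp (-q))/(S * a y) ≤ ρ β y := by
    have h2 : (1 - E)/(S * a y) ≤ ρ β y := by
      rw [key β y, ← div_div]
      nlinarith [mul_nonneg hEpos.le (hρpos β (y+1)).le]
    have h1 : (1 - Real.exp (-q))/(S * a y) ≤ (1 - E)/(S * a y) := by
      rw [div_le_div_iff₀ hSay hSay]
      nlinarith
    linarith
  have hnum : ρ β x - a y / a x * ρ β y = E * (ρ β (x+1) - a y / a x * ρ β (y+1)) := by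
    rw [key β x, key β y]
    field_simp
    ring
  have hratio : ρ β x / ρ β y - a y / a x = (ρ β x - a y / a x * ρ β y) / ρ β y := by
    field_simp [haxne, (hρpos β y).ne']
  rw [hratio, abs_div, abs_of_pos (hρpos β y), hnum, abs_mul, abs_of_pos hEpos]
  have habs : |ρ β (x+1) - a y / a x * ρ β (y+1)| ≤ 1 + a y / a x := by
    have h1 := hρle1 β (x+1)
    have h2 := hρle1 β (y+1)
    have h3 := hρpos β (x+1)
    have h4 := hρpos β (y+1)
    rw [abs_le]
    constructor <;> nlinarith
  have hdpos : 0 < (1 - Real.exp (-q))/(S * a y) := div_pos hden hSay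
  have hstep : E * |ρ β (x+1) - a y / a x * ρ β (y+1)| / ρ β y
      ≤ E * (1 + a y / a x) / ((1 - Real.exp (-q))/(S * a y)) := by
    exact div_le_div₀ (mul_nonneg hEpos.le (by linarith))
      (mul_le_mul_of_nonneg_left habs hEpos.le) hdpos hdy
  refine le_trans hstep (le_of_eq ?_)
  rw [show Real.exp (-β * q) = E from by rw [neg_mul],
    div_div_eq_mul_div]
  field_simp
  try ring
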